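/- Let n ≥ 1 and let t_1, …, t_{n+1} be pairwise distinct real numbers. Let L be the collocation matrix of the Newton basis at these nodes. Then L is totally positive if and only if t_1 < t_2 < ⋯ < t_{n+1}. -/

import Mathlib

open Finset

private lemma npProdSplit (t : ℕ → ℝ) (b d : ℕ) (hbd : b ≤ d) (x : ℝ) :
    ∏ k ∈ Icc (b+1) d, (x - t k)
      = (∏ k ∈ Icc (b+2) (d+1), (x - t k))
        + (t (d+1) - t (b+1)) * ∏ k ∈ Icc (b+2) d, (x - t k) := by
  rcases eq_or_lt_of_le hbd with rfl | hlt
  · rw [Finset.Icc_eq_empty (by omega), Finset.Icc_eq_empty (by omega),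
      Finset.Icc_eq_empty (by omega)]
    simp
  · have h1 : b + 1 ≤ d := hlt
    have hins : Icc (b+1) d = insert (b+1) (Icc (b+2) d) := by
      ext k; simp only [Finset.mem_Icc, Finset.mem_insert]; omega
    have e1 : ∏ k ∈ Icc (b+1) d, (x - t k)
        = (x - t (b+1)) * ∏ k ∈ Icc (b+2) d, (x - t k) := by
      rw [hins, Finset.prod_insert (by simp)]
    have e2 : ∏ k ∈ Icc (b+2) (d+1), (x - t k)
        = (∏ k ∈ Icc (b+2) d, (x - t k)) * (x - t (d+1)) :=
      Finset.prod_Icc_succ_top (by omega) _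
    rw [e1, e2]; ring

private lemma detBlockZero {r : ℕ} (M : Matrix (Fin r) (Fin r) ℝ) (p : Fin r)
    (h : ∀ u v : Fin r, u ≤ p → p ≤ v → M u v = 0) : M.det = 0 := by
  rw [Matrix.det_apply']
  apply Finset.sum_eq_zero
  intro σ _
  by_cases hex : ∃ i, p ≤ i ∧ σ i ≤ p
  · obtain ⟨i, hpi, hσi⟩ := hex
    exact mul_eq_zero_of_right _
      (Finset.prod_eq_zero (Finset.mem_univ i) (h _ _ hσi hpi))
  · exfalso
    push_neg at hex
    have hcard := Finset.card_le_card_of_injOn (f := σ) (s := Finset.Ici p) (t := Finset.Ioi p)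
      (fun i hi => Finset.mem_Ioi.mpr (hex i (Finset.mem_Ici.mp hi))) σ.injective.injOn
    have hss : Finset.Ioi p ⊂ Finset.Ici p := by
      constructor
      · intro x hx; exact Finset.mem_Ici.mpr (le_of_lt (Finset.mem_Ioi.mp hx))
      · intro hsub
        have := hsub (Finset.mem_Ici.mpr le_rfl)
        simp at this
    exact absurd hcard (not_le.mpr (Finset.card_lt_card hss))

private def colFun (t : ℕ → ℝ) {m : ℕ} (a : Fin m → ℕ) (b d : ℕ) : Fin m → ℝ :=
  fun p => ∏ k ∈ Icc (b+1) d, (t (a p) - t k)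

private def gFun (t : ℕ → ℝ) {m : ℕ} (a : Fin m → ℕ) (b : ℕ) (c : Fin m → ℕ)
    (q : Fin m) (e : Bool) : Fin m → ℝ :=
  if e then colFun t a (b+1) (c q + 1)
  else (t (c q + 1) - t (b+1)) • colFun t a (b+1) (c q)

private lemma keyLemma (n : ℕ) (t : ℕ → ℝ)
    (hmono : ∀ i j, 1 ≤ i → i < j → j ≤ n + 1 → t i < t j) :
    ∀ μ b r (a c : Fin r → ℕ), StrictMono a → StrictMono c →
      (∀ p, b + 1 ≤ a p) → (∀ p, a p ≤ n + 1) → (∀ q, b ≤ c q) → (∀ q, c q ≤ n + 1) →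
      n + 1 - b + r ≤ μ →
      0 ≤ (Matrix.of fun p q : Fin r => ∏ k ∈ Icc (b+1) (c q), (t (a p) - t k)).det := by
  intro μ
  induction μ with
  | zero =>
    intro b r
    rcases r with _ | r
    · intro a c _ _ _ _ _ _ _
      rw [Matrix.det_fin_zero]; norm_num
    · intro a c _ _ _ _ _ _ hμ
      omega
  | succ μ ih =>
    intro b r
    rcases r with _ | r
    · intro a c _ _ _ _ _ _ _
      rw [Matrix.det_fin_zero]; norm_num
    intro a c hsa hsc ha1 ha2 hc1 hc2 hμ
    by_cases hex : ∃ p, a p ≤ c p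
    · obtain ⟨p, hp⟩ := hex
      have hz : (Matrix.of fun p q : Fin (r+1) =>
          ∏ k ∈ Icc (b+1) (c q), (t (a p) - t k)).det = 0 := by
        apply detBlockZero _ p
        intro u v hu hv
        exact Finset.prod_eq_zero
          (Finset.mem_Icc.mpr ⟨ha1 u, le_trans (le_trans (hsa.monotone hu) hp)
            (hsc.monotone hv)⟩) (sub_self _)
      rw [hz]
    push_neg at hex
    by_cases h0 : a 0 = b + 1
    · -- first row is (1,0,...,0)
      have hc0 : c 0 = b := by have := hex 0; have := hc1 0; omega
      rw [Matrix.det_succ_row_zero]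
      rw [Finset.sum_eq_single 0]
      · simp only [Fin.val_zero, pow_zero, one_mul, Fin.succAbove_zero]
        have hone : (Matrix.of fun p q : Fin (r+1) =>
            ∏ k ∈ Icc (b+1) (c q), (t (a p) - t k)) 0 0 = 1 := by
          show (∏ k ∈ Icc (b+1) (c 0), (t (a 0) - t k)) = 1
          rw [hc0, Finset.Icc_eq_empty (by omega), Finset.prod_empty]
        rw [hone, one_mul]
        have hsub : ((Matrix.of fun p q : Fin (r+1) =>
              ∏ k ∈ Icc (b+1) (c q), (t (a p) - t k)).submatrix Fin.succ Fin.succ)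
            = Matrix.of fun p q : Fin r =>
              ∏ k ∈ Icc (b+1) ((c ∘ Fin.succ) q), (t ((a ∘ Fin.succ) p) - t k) := rfl
        rw [hsub]
        exact ih b r (a ∘ Fin.succ) (c ∘ Fin.succ)
          (hsa.comp Fin.strictMono_succ) (hsc.comp Fin.strictMono_succ)
          (fun p => ha1 _) (fun p => ha2 _) (fun q => hc1 _) (fun q => hc2 _) (by omega)
      · intro j _ hj
        have hcj : b + 1 ≤ c j := by
          have := hsc (Fin.pos_of_ne_zero hj)
          omega
        have hzero : (Matrix.of fun p q : Fin (r+1) =>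
            ∏ k ∈ Icc (b+1) (c q), (t (a p) - t k)) 0 j = 0 := by
          show (∏ k ∈ Icc (b+1) (c j), (t (a 0) - t k)) = 0
          apply Finset.prod_eq_zero (Finset.mem_Icc.mpr ⟨le_refl _, hcj⟩)
          rw [h0, sub_self]
        rw [hzero, mul_zero, zero_mul]
      · intro h; exact absurd (Finset.mem_univ 0) h
    · -- expansion step
      have hb2 : ∀ p, b + 2 ≤ a p := by
        intro p
        have h00 : b + 2 ≤ a 0 := by have := ha1 0; omega
        have : a 0 ≤ a p := hsa.monotone (Fin.zero_le p)
        omega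
      have hbn : b ≤ n := by have := ha2 0; have := hb2 0; omega
      set F := ((Matrix.detRowAlternating :
        (Fin (r+1) → ℝ) [⋀^Fin (r+1)]→ₗ[ℝ] ℝ)).toMultilinearMap with hF
      have e0 : (Matrix.of fun p q : Fin (r+1) =>
          ∏ k ∈ Icc (b+1) (c q), (t (a p) - t k)).det
          = F (fun q => colFun t a b (c q)) := by
        rw [← Matrix.det_transpose]; rfl
      rw [e0]
      have hrow : (fun q => colFun t a b (c q))
          = fun q => ∑ e : Bool, gFun t a b c q e := by
        funext q p
        rw [Fintype.sum_bool]
        show (∏ k ∈ Icc (b+1) (c q), (t (a p) - t k))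
          = colFun t a (b+1) (c q + 1) p
            + ((t (c q + 1) - t (b+1)) • colFun t a (b+1) (c q)) p
        simp only [colFun, Pi.smul_apply, smul_eq_mul]
        exact npProdSplit t b (c q) (hc1 q) _
      rw [hrow, F.map_sum]
      apply Finset.sum_nonneg
      intro ρ _
      set dd : Fin (r+1) → ℕ := fun q => if ρ q then c q + 1 else c q with hdd
      set coeff : Fin (r+1) → ℝ := fun q => if ρ q then 1 else t (c q + 1) - t (b+1)
        with hcoeff
      have hgc : (fun q => gFun t a b c q (ρ q))
          = fun q => coeff q • colFun t a (b+1) (dd q) := by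
        funext q
        by_cases hq : ρ q <;> simp [gFun, hdd, hcoeff, hq, one_smul]
      rw [hgc, F.map_smul_univ]
      have hcoeffnn : ∀ q, 0 ≤ coeff q := by
        intro q
        by_cases hq : ρ q
        · simp [hcoeff, hq]
        · simp only [hcoeff, hq, Bool.false_eq_true, if_false]
          rcases eq_or_lt_of_le (hc1 q) with hb | hb
          · rw [← hb]; simp
          · have h1 : c q + 1 ≤ n + 1 := by have := hex q; have := ha2 q; omega
            have := hmono (b+1) (c q + 1) (by omega) (by omega) h1
            linarith
      by_cases hz : (∏ q, coeff q) = 0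
      · rw [hz, zero_smul]
      · apply smul_nonneg (Finset.prod_nonneg fun q _ => hcoeffnn q)
        have hne : ∀ q, coeff q ≠ 0 := fun q hq0 =>
          hz (Finset.prod_eq_zero (Finset.mem_univ q) hq0)
        have hd1 : ∀ q, b + 1 ≤ dd q := by
          intro q
          by_cases hq : ρ q
          · have := hc1 q; simp [hdd, hq]; omega
          · have hcb : c q ≠ b := by
              intro hcb
              apply hne q
              simp [hcoeff, hq, hcb]
            have := hc1 q; simp [hdd, hq]; omega
        have hd2 : ∀ q, dd q ≤ n + 1 := by
          intro q; have := hex q; have := ha2 q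
          by_cases hq : ρ q <;> simp [hdd, hq] <;> omega
        by_cases hinj : Function.Injective dd
        · have hmon : Monotone dd := by
            intro q q' hle
            rcases eq_or_lt_of_le hle with rfl | hlt
            · exact le_refl _
            · have := hsc hlt
              by_cases h1 : ρ q <;> by_cases h2 : ρ q' <;> simp [hdd, h1, h2] <;> omega
          have hds : StrictMono dd := hmon.strictMono_of_injective hinj
          have hconv : F (fun q => colFun t a (b+1) (dd q))
              = (Matrix.of fun p q : Fin (r+1) =>
                  ∏ k ∈ Icc ((b+1)+1) (dd q), (t (a p) - t k)).det := by
            rw [← Matrix.det_transpose]; rfl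
          rw [hconv]
          exact ih (b+1) (r+1) a dd hsa hds (fun p => by have := hb2 p; omega) ha2
            hd1 hd2 (by omega)
        · obtain ⟨q, q', heq, hne'⟩ := Function.not_injective_iff.mp hinj
          have hz2 : F (fun q => colFun t a (b+1) (dd q)) = 0 :=
            (Matrix.detRowAlternating :
              (Fin (r+1) → ℝ) [⋀^Fin (r+1)]→ₗ[ℝ] ℝ).map_eq_zero_of_eq
              (fun q => colFun t a (b+1) (dd q))
              (congrArg (fun d => colFun t a (b+1) d) heq) hne'
          rw [hz2]

/-- A square real matrix is totally positive if all its minors (determinants of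
submatrices with strictly increasing row and column indices) are nonnegative. -/
def TotallyPositive {m : ℕ} (A : Matrix (Fin m) (Fin m) ℝ) : Prop :=
  ∀ (r : ℕ) (f g : Fin r → Fin m), StrictMono f → StrictMono g →
    0 ≤ (A.submatrix f g).det

/-- the collocation matrix `L` of the Newton basis at pairwise
distinct nodes `t 1, …, t (n+1)` is totally positive iff the nodes are in
strictly increasing order. -/
theorem newton_collocation_totally_positive_iff_increasing
    (n : ℕ) (hn : 1 ≤ n) (t : ℕ → ℝ)
    (ht : ∀ i j, 1 ≤ i → i ≤ n + 1 → 1 ≤ j → j ≤ n + 1 → i ≠ j → t i ≠ t j)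
    (L : Matrix (Fin (n + 1)) (Fin (n + 1)) ℝ)
    (hL : ∀ i j, L i j = ∏ k ∈ Finset.Icc 1 j.val, (t (i.val + 1) - t k)) :
    TotallyPositive L ↔ ∀ i j, 1 ≤ i → i < j → j ≤ n + 1 → t i < t j := by
  constructor
  · intro hTP
    have hentry : ∀ (i j : Fin (n+1)), 0 ≤ L i j := by
      intro i j
      have hsm : ∀ x : Fin (n+1), StrictMono (fun _ : Fin 1 => x) := by
        intro x u v huv
        exact absurd ((Subsingleton.elim v u) ▸ huv) (lt_irrefl u)
      have := hTP 1 (fun _ => i) (fun _ => j) (hsm i) (hsm j)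
      rwa [Matrix.det_fin_one, Matrix.submatrix_apply] at this
    have hconsec : ∀ m, 1 ≤ m → m ≤ n → t m < t (m+1) := by
      intro m h1 h2
      obtain ⟨m', rfl⟩ : ∃ m', m = m' + 1 := ⟨m - 1, by omega⟩
      have hP2 : 0 ≤ ∏ k ∈ Icc 1 (m'+1), (t (m'+2) - t k) := by
        have := hentry ⟨m'+1, by omega⟩ ⟨m'+1, by omega⟩
        rwa [hL] at this
      have hP1 : 0 ≤ ∏ k ∈ Icc 1 m', (t (m'+2) - t k) := by
        have := hentry ⟨m'+1, by omega⟩ ⟨m', by omega⟩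
        rwa [hL] at this
      have hP1pos : 0 < ∏ k ∈ Icc 1 m', (t (m'+2) - t k) := by
        have hne : ∏ k ∈ Icc 1 m', (t (m'+2) - t k) ≠ 0 := by
          rw [Finset.prod_ne_zero_iff]
          intro k hk
          rw [Finset.mem_Icc] at hk
          exact sub_ne_zero_of_ne
            (ht (m'+2) k (by omega) (by omega) (by omega) (by omega) (by omega))
        exact lt_of_le_of_ne hP1 (Ne.symm hne)
      have hsplit : ∏ k ∈ Icc 1 (m'+1), (t (m'+2) - t k)
          = (∏ k ∈ Icc 1 m', (t (m'+2) - t k)) * (t (m'+2) - t (m'+1)) :=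
        Finset.prod_Icc_succ_top (by omega) _
      rw [hsplit] at hP2
      have hge : 0 ≤ t (m'+2) - t (m'+1) :=
        (mul_nonneg_iff_of_pos_left hP1pos).mp hP2
      have hneq : t (m'+1) ≠ t (m'+2) :=
        ht (m'+1) (m'+2) (by omega) (by omega) (by omega) (by omega) (by omega)
      have : t (m'+1) ≤ t (m'+2) := by linarith
      exact lt_of_le_of_ne this hneq
    have hchain : ∀ j i, 1 ≤ i → i < j → j ≤ n + 1 → t i < t j := by
      intro j
      induction j with
      | zero => intro i _ h _; omega
      | succ j ihj =>
        intro i hi hij hj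
        rcases Nat.lt_or_ge i j with hlt | hge
        · exact lt_trans (ihj i hi hlt (by omega)) (hconsec j (by omega) (by omega))
        · have : i = j := by omega
          subst this
          exact hconsec i hi (by omega)
    intro i j hi hij hj
    exact hchain j i hi hij hj
  · intro hmono r f g hf hg
    have hM : L.submatrix f g = Matrix.of (fun p q : Fin r =>
        ∏ k ∈ Icc (0+1) ((g q : ℕ)), (t ((f p : ℕ) + 1) - t k)) := by
      ext p q
      rw [Matrix.submatrix_apply, hL, Matrix.of_apply]
    rw [hM]
    have hfv : StrictMono (fun p : Fin r => (f p : ℕ) + 1) := by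
      intro x y h
      show (f x : ℕ) + 1 < (f y : ℕ) + 1
      have := hf h
      rw [Fin.lt_def] at this
      omega
    have hgv : StrictMono (fun q : Fin r => (g q : ℕ)) := by
      intro x y h
      show (g x : ℕ) < (g y : ℕ)
      have := hg h
      rw [Fin.lt_def] at this
      exact this
    exact keyLemma n t hmono (n + 1 + r) 0 r (fun p => (f p : ℕ) + 1) (fun q => (g q : ℕ))
      hfv hgv (fun p => by show 0 + 1 ≤ (f p : ℕ) + 1; omega)
      (fun p => by show (f p : ℕ) + 1 ≤ n + 1; have := (f p).isLt; omega)
      (fun q => by show 0 ≤ (g q : ℕ); omega)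
      (fun q => by show (g q : ℕ) ≤ n + 1; have := (g q).isLt; omega) (by omega)
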